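/- In the stochastic matching model with stationary distribution π on the sets of unmatched item classes satisfying the recursion π(I)(α(E(I)) − α(I)) = Σ_{i ∈ I} α_i π(I \ {i}) for every nonempty independent set I, Σ_{I} π(I) = 1, and with per-class waiting probabilities ω_i = Σ_{I : i ∉ E(I)} π(I), the average waiting probability satisfies Σ_{i ∈ V} α_i ω_i = 1/2, where Σ_{i ∈ V} α_i = 1. -/

import Mathlib

open Finset

def IsIndep {V : Type*} (G : SimpleGraph V) (I : Finset V) : Prop :=
  ∀ i ∈ I, ∀ j ∈ I, ¬ G.Adj i j

def nbhd {V : Type*} [Fintype V] [DecidableEq V] (G : SimpleGraph V) [DecidableRel G.Adj]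
    (A : Finset V) : Finset V :=
  A.biUnion fun i => G.neighborFinset i

lemma mem_nbhd {V : Type*} [Fintype V] [DecidableEq V] (G : SimpleGraph V) [DecidableRel G.Adj]
    (A : Finset V) (i : V) : i ∈ nbhd G A ↔ ∃ j ∈ A, G.Adj j i := by
  simp [nbhd, SimpleGraph.mem_neighborFinset]

lemma isIndep_subset {V : Type*} (G : SimpleGraph V) {I J : Finset V} (h : J ⊆ I)
    (hI : IsIndep G I) : IsIndep G J :=
  fun i hi j hj => hI i (h hi) j (h hj)

lemma isIndep_insert {V : Type*} [Fintype V] [DecidableEq V] (G : SimpleGraph V)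
    [DecidableRel G.Adj] {J : Finset V} {i : V} (hJ : IsIndep G J)
    (hi : i ∉ nbhd G J) : IsIndep G (insert i J) := by
  intro x hx y hy hadj
  rcases mem_insert.1 hx with hx | hx
  · rcases mem_insert.1 hy with hy | hy
    · exact G.irrefl (hx ▸ hy ▸ hadj)
    · exact hi ((mem_nbhd G J i).2 ⟨y, hy, (hx ▸ hadj).symm⟩)
  · rcases mem_insert.1 hy with hy | hy
    · exact hi ((mem_nbhd G J i).2 ⟨x, hx, hy ▸ hadj⟩)
    · exact hJ x hx y hy hadj

lemma indep_disjoint_nbhd {V : Type*} [Fintype V] [DecidableEq V] (G : SimpleGraph V)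
    [DecidableRel G.Adj] {J : Finset V} (hJ : IsIndep G J) : Disjoint J (nbhd G J) := by
  rw [Finset.disjoint_left]
  intro i hi hin
  obtain ⟨j, hj, hadj⟩ := (mem_nbhd G J i).1 hin
  exact hJ j hj i hi hadj

/-- The average waiting probability is `1/2`: `Σ_i α_i ω_i = 1/2`, where
`ω_i = Σ_{I : i ∉ E(I)} π(I)` and `π` satisfies the stationary recursion. -/
theorem stmt11 {V : Type*} [Fintype V] [DecidableEq V] (G : SimpleGraph V) [DecidableRel G.Adj]
    [DecidablePred (IsIndep G)]
    (α : V → ℝ) (hα : ∀ i, 0 < α i) (hα1 : ∑ i, α i = 1)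
    (hstab : ∀ I : Finset V, I.Nonempty → IsIndep G I →
      ∑ i ∈ I, α i < ∑ j ∈ nbhd G I, α j)
    (S : Finset (Finset V))
    (hS : S = (Finset.univ : Finset (Finset V)).filter (fun I => I = ∅ ∨ IsIndep G I))
    (π : Finset V → ℝ)
    (hπpos : ∀ I ∈ S, 0 ≤ π I)
    (hrec : ∀ I : Finset V, I.Nonempty → IsIndep G I →
      π I * ((∑ j ∈ nbhd G I, α j) - ∑ i ∈ I, α i) = ∑ i ∈ I, α i * π (I.erase i))
    (hnorm : ∑ I ∈ S, π I = 1)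
    (ω : V → ℝ)
    (hω : ∀ i, ω i = ∑ I ∈ S.filter (fun I => i ∉ nbhd G I), π I) :
    ∑ i, α i * ω i = 1 / 2 := by
  classical
  have hSmem : ∀ I : Finset V, I ∈ S ↔ IsIndep G I := by
    intro I
    rw [hS]
    simp only [mem_filter, mem_univ, true_and]
    constructor
    · rintro (rfl | h)
      · intro i hi; simp at hi
      · exact h
    · exact Or.inr
  -- abbreviations
  set N : Finset V → ℝ := fun I => ∑ j ∈ nbhd G I, α j with hNdef
  set a : Finset V → ℝ := fun I => ∑ i ∈ I, α i with hadef
  -- Step 1: rewrite the recursion summed over S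
  have step1 : ∑ I ∈ S, (π I * N I - π I * a I)
      = ∑ I ∈ S, ∑ i ∈ I, α i * π (I.erase i) := by
    refine Finset.sum_congr rfl fun I hI => ?_
    rcases I.eq_empty_or_nonempty with rfl | hne
    · simp [hNdef, hadef, nbhd]
    · rw [← mul_sub]
      exact hrec I hne ((hSmem I).1 hI)
  -- Step 2: reindex the double sum
  have step2 : ∑ I ∈ S, ∑ i ∈ I, α i * π (I.erase i)
      = ∑ J ∈ S, ∑ i ∈ univ \ (J ∪ nbhd G J), α i * π J := by
    rw [Finset.sum_sigma', Finset.sum_sigma']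
    refine Finset.sum_nbij' (fun p => ⟨p.1.erase p.2, p.2⟩)
      (fun p => ⟨insert p.2 p.1, p.2⟩) ?_ ?_ ?_ ?_ ?_
    · rintro ⟨I, i⟩ hp
      rw [Finset.mem_sigma] at hp ⊢
      obtain ⟨hI, hi⟩ := hp
      have hind := (hSmem I).1 hI
      refine ⟨(hSmem _).2 (isIndep_subset G (erase_subset _ _) hind), ?_⟩
      rw [mem_sdiff, mem_union]
      refine ⟨mem_univ _, ?_⟩
      push_neg
      refine ⟨notMem_erase _ _, ?_⟩
      intro hmem
      obtain ⟨j, hj, hadj⟩ := (mem_nbhd G _ i).1 hmem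
      exact hind j (mem_of_mem_erase hj) i hi hadj
    · rintro ⟨J, i⟩ hp
      rw [Finset.mem_sigma] at hp ⊢
      obtain ⟨hJ, hi⟩ := hp
      rw [mem_sdiff, mem_union] at hi
      push_neg at hi
      exact ⟨(hSmem _).2 (isIndep_insert G ((hSmem J).1 hJ) hi.2.2),
        mem_insert_self _ _⟩
    · rintro ⟨I, i⟩ hp
      rw [Finset.mem_sigma] at hp
      simp [Finset.insert_erase hp.2]
    · rintro ⟨J, i⟩ hp
      rw [Finset.mem_sigma] at hp
      have hi := hp.2
      rw [mem_sdiff, mem_union] at hi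
      push_neg at hi
      simp [Finset.erase_insert hi.2.1]
    · rintro ⟨I, i⟩ hp
      rfl
  -- Step 3: evaluate the inner sum
  have step3 : ∀ J ∈ S, ∑ i ∈ univ \ (J ∪ nbhd G J), α i = 1 - a J - N J := by
    intro J hJ
    rw [Finset.sum_sdiff_eq_sub (subset_univ _), hα1,
      Finset.sum_union (indep_disjoint_nbhd G ((hSmem J).1 hJ))]
    ring
  -- Step 4: conclude T = 1/2 where T = ∑ π I * N I
  have step4 : ∑ I ∈ S, π I * N I = 1 / 2 := by
    have h : ∑ I ∈ S, (π I * N I - π I * a I)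
        = ∑ J ∈ S, π J * (1 - a J - N J) := by
      rw [step1, step2]
      refine Finset.sum_congr rfl fun J hJ => ?_
      rw [← Finset.sum_mul, step3 J hJ, mul_comm]
    rw [Finset.sum_sub_distrib] at h
    have h2 : ∑ J ∈ S, π J * (1 - a J - N J)
        = 1 - (∑ J ∈ S, π J * a J) - ∑ J ∈ S, π J * N J := by
      simp only [mul_sub, mul_one]
      rw [Finset.sum_sub_distrib, Finset.sum_sub_distrib, hnorm]
    rw [h2] at h
    linarith
  -- Step 5: final computation
  have hsum : ∑ i, α i * ω i = ∑ I ∈ S, π I * (1 - N I) := by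
    calc ∑ i, α i * ω i
        = ∑ i, ∑ I ∈ S, (if i ∉ nbhd G I then α i * π I else 0) := by
          refine Finset.sum_congr rfl fun i _ => ?_
          rw [hω i, Finset.mul_sum, ← Finset.sum_filter]
      _ = ∑ I ∈ S, ∑ i, (if i ∉ nbhd G I then α i * π I else 0) := Finset.sum_comm
      _ = ∑ I ∈ S, π I * (1 - N I) := by
          refine Finset.sum_congr rfl fun I _ => ?_
          rw [← Finset.sum_filter]
          have : univ.filter (fun i => i ∉ nbhd G I) = univ \ nbhd G I := by
            ext x; simp
          rw [this, ← Finset.sum_mul, Finset.sum_sdiff_eq_sub (subset_univ _), hα1,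
            mul_comm]
    
  rw [hsum]
  have : ∑ I ∈ S, π I * (1 - N I) = 1 - ∑ I ∈ S, π I * N I := by
    simp only [mul_sub, mul_one]
    rw [Finset.sum_sub_distrib, hnorm]
  rw [this, step4]
  norm_num
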